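/- Consider the explicit ExpRB update u_{n+1} = u_n + H φ_1(HJ_n) F(t_n,u_n) + H^2 φ_2(HJ_n) V_n + H ∑_{i=2}^s b_i(HJ_n) D_{ni}, where each b_i(HJ_n) = ∑_{k=1}^{m_i} β_i^{(k)} φ_k(HJ_n) with φ_k(HJ) = (1/H^k)∫_0^H e^{(H−τ)J} τ^{k-1}/(k−1)! dτ. Then u_{n+1} equals the value at τ = H of the exact solution of the linear IVP v'(τ) = J_n v(τ) + q_n(τ), v(0) = u_n, with polynomial forcing q_n(τ) = N_n(t_n,u_n) + (t_n+τ) V_n + ∑_{i=2}^s (∑_{k=1}^{m_i} β_i^{(k)} τ^{k-1}/(H^{k-1}(k−1)!)) D_{ni}, where F(t_n,u_n) = J_n u_n + V_n t_n + N_n(t_n,u_n). -/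

import Mathlib

set_option maxHeartbeats 1000000
open intervalIntegral MeasureTheory


/-- Lemma 2.1 (final stage): the explicit ExpRB update
u_{n+1} = u_n + H φ_1(HJ) F_n + H² φ_2(HJ) V_n + H ∑_{i=2}^s b_i(HJ) D_{ni},
with b_i(HJ) = ∑_{k=1}^{m_i} β_i^{(k)} φ_k(HJ), equals the value at τ = H of the exact
solution of v'(τ) = J v(τ) + q_n(τ), v(0) = u_n, where
q_n(τ) = N_n + (t_n+τ) V_n + ∑_{i=2}^s (∑_k β_i^{(k)} τ^{k-1}/(H^{k-1}(k−1)!)) D_{ni}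
and N_n = F_n − J u_n − t_n V_n. -/
theorem expRB_update_is_modified_IVP_solution {E : Type*} [NormedAddCommGroup E]
    [NormedSpace ℝ E] [CompleteSpace E]
    (J : E →L[ℝ] E) (H : ℝ) (hH : 0 < H) (tn : ℝ) (un Vn Fn : E)
    (s : ℕ) (m : ℕ → ℕ) (β : ℕ → ℕ → ℝ) (D : ℕ → E)
    (φ : ℕ → (E →L[ℝ] E))
    (hφ : ∀ k, 1 ≤ k → φ k = (H ^ k)⁻¹ •
      ∫ τ in (0:ℝ)..H, (τ ^ (k - 1) / (Nat.factorial (k - 1))) •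
        NormedSpace.exp ((H - τ) • J))
    (N : E) (hN : N = Fn - J un - tn • Vn)
    (q : ℝ → E)
    (hq : ∀ τ, q τ = N + (tn + τ) • Vn
      + ∑ i ∈ Finset.Icc 2 s,
          (∑ k ∈ Finset.Icc 1 (m i),
              β i k * τ ^ (k - 1) / (H ^ (k - 1) * Nat.factorial (k - 1))) • D i)
    (v : ℝ → E) (hv0 : v 0 = un)
    (hv : ∀ τ ∈ Set.Icc (0:ℝ) H,
      HasDerivWithinAt v (J (v τ) + q τ) (Set.Icc (0:ℝ) H) τ) :
    v H = un + H • (φ 1) Fn + (H ^ 2) • (φ 2) Vn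
      + H • ∑ i ∈ Finset.Icc 2 s,
          (∑ k ∈ Finset.Icc 1 (m i), β i k • φ k) (D i) := by
  classical
  set e : ℝ → (E →L[ℝ] E) := fun τ => NormedSpace.exp ((H - τ) • J) with he_def
  have he : Continuous e := by
    exact (continuous_iff_continuousAt.2 fun x => (NormedSpace.exp_analytic (𝕂 := ℝ) x).continuousAt).comp (by fun_prop)
  have hqc : Continuous q := by
    rw [show q = _ from funext hq]; fun_prop
  -- derivative of e
  have hde : ∀ τ : ℝ, HasDerivAt e (-(e τ * J)) τ := by
    intro τ
    have h1 : HasDerivAt (fun u : ℝ => NormedSpace.exp (u • J))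
        (NormedSpace.exp ((H - τ) • J) * J) (H - τ) := hasDerivAt_exp_smul_const J (H - τ)
    have h2 : HasDerivAt (fun σ : ℝ => H - σ) (-1) τ := by
      simpa using (hasDerivAt_id τ).const_sub H
    have := h1.scomp τ h2
    simpa [neg_smul, Function.comp_def] using this
  -- continuity of v on Icc
  have hvc : ContinuousOn v (Set.Icc 0 H) := fun τ hτ => (hv τ hτ).continuousWithinAt
  -- g := e τ (v τ)
  have key : ∫ τ in (0:ℝ)..H, (e τ) (q τ) = v H - (e 0) un := by
    have hcont : ContinuousOn (fun τ => (e τ) (v τ)) (Set.Icc 0 H) :=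
      he.continuousOn.clm_apply hvc
    have hderiv : ∀ τ ∈ Set.Ioo (0:ℝ) H,
        HasDerivWithinAt (fun σ => (e σ) (v σ)) ((e τ) (q τ)) (Set.Ioi τ) τ := by
      intro τ hτ
      have hvd : HasDerivAt v (J (v τ) + q τ) τ := by
        have := hv τ (Set.Ioo_subset_Icc_self hτ)
        exact this.hasDerivAt (Icc_mem_nhds hτ.1 hτ.2)
      have := ((hde τ).clm_apply hvd).hasDerivWithinAt (s := Set.Ioi τ)
      convert this using 1
      simp [ContinuousLinearMap.mul_apply]
    have hint : IntervalIntegrable (fun τ => (e τ) (q τ)) volume 0 H :=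
      (he.clm_apply hqc).intervalIntegrable 0 H
    have := integral_eq_sub_of_hasDeriv_right_of_le hH.le hcont hderiv hint
    rw [this, hv0]
    simp [he_def, NormedSpace.exp_zero]
  -- exp(H J) un = un + ∫ e τ (J un)
  have hexp0 : (e 0) un = un + ∫ τ in (0:ℝ)..H, (e τ) (J un) := by
    have h1 : ∀ τ : ℝ, HasDerivAt (fun σ : ℝ => NormedSpace.exp (σ • J) un)
        (NormedSpace.exp (τ • J) (J un)) τ := by
      intro τ
      have := (hasDerivAt_exp_smul_const J τ).clm_apply (hasDerivAt_const τ un)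
      simpa [ContinuousLinearMap.mul_apply] using this
    have hint : IntervalIntegrable (fun τ : ℝ => NormedSpace.exp (τ • J) (J un)) volume 0 H := by
      apply Continuous.intervalIntegrable
      exact ((continuous_iff_continuousAt.2 fun x => (NormedSpace.exp_analytic (𝕂 := ℝ) x).continuousAt).comp (by fun_prop)).clm_apply continuous_const
    have h2 : (∫ τ in (0:ℝ)..H, NormedSpace.exp (τ • J) (J un))
        = NormedSpace.exp (H • J) un - NormedSpace.exp ((0:ℝ) • J) un :=
      integral_eq_sub_of_hasDerivAt (fun τ _ => h1 τ) hint
    have h3 : (∫ τ in (0:ℝ)..H, (e τ) (J un))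
        = ∫ τ in (0:ℝ)..H, NormedSpace.exp (τ • J) (J un) := by
      simpa using intervalIntegral.integral_comp_sub_left
        (fun τ => NormedSpace.exp (τ • J) (J un)) H (a := 0) (b := H)
    rw [h3, h2]
    simp [he_def, NormedSpace.exp_zero]
  -- φ applied to vectors
  have hφ_apply : ∀ k, 1 ≤ k → ∀ x : E,
      (φ k) x = (H ^ k)⁻¹ • ∫ τ in (0:ℝ)..H,
        (τ ^ (k - 1) / (Nat.factorial (k - 1))) • (e τ x) := by
    intro k hk x
    rw [hφ k hk]
    have hint : IntervalIntegrable
        (fun τ => (τ ^ (k - 1) / (Nat.factorial (k - 1))) • e τ) volume 0 H :=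
      ((by fun_prop : Continuous fun τ : ℝ => (τ ^ (k - 1) / (Nat.factorial (k - 1)))).smul
        he).intervalIntegrable 0 H
    rw [ContinuousLinearMap.smul_apply, ContinuousLinearMap.intervalIntegral_apply hint]
    simp
  -- basic integrability
  have hIx : ∀ x : E, IntervalIntegrable (fun τ => e τ x) volume 0 H :=
    fun x => (he.clm_apply continuous_const).intervalIntegrable 0 H
  -- H • φ 1 x
  have hφ1 : ∀ x : E, H • (φ 1) x = ∫ τ in (0:ℝ)..H, e τ x := by
    intro x
    rw [hφ_apply 1 le_rfl x, smul_smul]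
    simp [hH.ne']
  have hφ2 : H ^ 2 • (φ 2) Vn = ∫ τ in (0:ℝ)..H, τ • e τ Vn := by
    rw [hφ_apply 2 (by norm_num) Vn, smul_smul]
    simp [hH.ne']
  have hφk : ∀ i k, 1 ≤ k → H • (β i k • (φ k) (D i))
      = ∫ τ in (0:ℝ)..H, (β i k * τ ^ (k-1) / (H ^ (k-1) * (Nat.factorial (k-1)))) • e τ (D i) := by
    intro i k hk
    have hcoef : ∀ τ : ℝ, (β i k * τ ^ (k-1) / (H ^ (k-1) * (Nat.factorial (k-1))))
        = (β i k / H ^ (k-1)) • (τ ^ (k-1) / (Nat.factorial (k-1)) : ℝ) := by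
      intro τ
      have h1 : (H : ℝ) ^ (k-1) ≠ 0 := pow_ne_zero _ hH.ne'
      have h2 : ((Nat.factorial (k-1) : ℝ)) ≠ 0 := Nat.cast_ne_zero.mpr (Nat.factorial_ne_zero _)
      rw [smul_eq_mul, div_mul_div_comm]
    simp_rw [hcoef, smul_assoc, intervalIntegral.integral_smul]
    rw [hφ_apply k hk, smul_smul, smul_smul]
    congr 1
    have hk' : H ^ k = H ^ (k-1) * H := by
      rw [← pow_succ]
      congr 1
      omega
    have h1 : (H : ℝ) ^ (k-1) ≠ 0 := pow_ne_zero _ hH.ne'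
    rw [hk']
    field_simp
  -- integrability pieces
  have int1 : IntervalIntegrable (fun τ => e τ N) volume 0 H := hIx N
  have int2 : IntervalIntegrable (fun τ => tn • e τ Vn) volume 0 H := (hIx Vn).smul tn
  have int3 : IntervalIntegrable (fun τ => τ • e τ Vn) volume 0 H :=
    (continuous_id.smul (he.clm_apply continuous_const)).intervalIntegrable 0 H
  have intik : ∀ i k, IntervalIntegrable
      (fun τ => (β i k * τ ^ (k-1) / (H ^ (k-1) * (Nat.factorial (k-1)))) • e τ (D i)) volume 0 H := by
    intro i k
    exact ((by fun_prop : Continuous fun τ : ℝ =>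
      (β i k * τ ^ (k-1) / (H ^ (k-1) * (Nat.factorial (k-1))))).smul
      (he.clm_apply continuous_const)).intervalIntegrable 0 H
  have inti : ∀ i, IntervalIntegrable
      (fun τ => ∑ k ∈ Finset.Icc 1 (m i),
        (β i k * τ ^ (k-1) / (H ^ (k-1) * (Nat.factorial (k-1)))) • e τ (D i)) volume 0 H := by
    intro i
    apply Continuous.intervalIntegrable
    exact continuous_finset_sum _ fun k _ =>
      (by fun_prop : Continuous fun τ : ℝ =>
        (β i k * τ ^ (k-1) / (H ^ (k-1) * (Nat.factorial (k-1))))).smul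
        (he.clm_apply continuous_const)
  have int4 : IntervalIntegrable (fun τ => ∑ i ∈ Finset.Icc 2 s, ∑ k ∈ Finset.Icc 1 (m i),
      (β i k * τ ^ (k-1) / (H ^ (k-1) * (Nat.factorial (k-1)))) • e τ (D i)) volume 0 H := by
    apply Continuous.intervalIntegrable
    exact continuous_finset_sum _ fun i _ => continuous_finset_sum _ fun k _ =>
      (by fun_prop : Continuous fun τ : ℝ =>
        (β i k * τ ^ (k-1) / (H ^ (k-1) * (Nat.factorial (k-1))))).smul
        (he.clm_apply continuous_const)
  -- pointwise expansion of the integrand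
  have hptw : ∀ τ : ℝ, e τ (q τ) = ((fun τ => e τ N) τ + (fun τ => tn • e τ Vn) τ
      + (fun τ => τ • e τ Vn) τ)
      + ∑ i ∈ Finset.Icc 2 s, ∑ k ∈ Finset.Icc 1 (m i),
          (β i k * τ ^ (k-1) / (H ^ (k-1) * (Nat.factorial (k-1)))) • e τ (D i) := by
    intro τ
    rw [hq τ]
    simp only [map_add, map_sum, _root_.map_smul, Finset.sum_smul, add_smul]
    abel
  have hsplit : (∫ τ in (0:ℝ)..H, e τ (q τ))
      = ((∫ τ in (0:ℝ)..H, e τ N) + tn • (∫ τ in (0:ℝ)..H, e τ Vn)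
        + ∫ τ in (0:ℝ)..H, τ • e τ Vn)
      + ∑ i ∈ Finset.Icc 2 s, ∑ k ∈ Finset.Icc 1 (m i),
          ∫ τ in (0:ℝ)..H, (β i k * τ ^ (k-1) / (H ^ (k-1) * (Nat.factorial (k-1)))) • e τ (D i) := by
    simp_rw [hptw]
    rw [intervalIntegral.integral_add ((int1.add int2).add int3) int4,
      intervalIntegral.integral_add (int1.add int2) int3,
      intervalIntegral.integral_add int1 int2,
      intervalIntegral.integral_smul,
      intervalIntegral.integral_finset_sum (fun i _ => inti i)]
    congr 1
    exact Finset.sum_congr rfl fun i _ =>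
      intervalIntegral.integral_finset_sum (fun k _ => intik i k)
  -- assemble
  have hFn : Fn = N + J un + tn • Vn := by rw [hN]; abel
  have hvH : v H = un + (∫ τ in (0:ℝ)..H, e τ (J un)) + ∫ τ in (0:ℝ)..H, e τ (q τ) := by
    rw [key, hexp0]
    abel
  have e1 : H • (φ 1) Fn = (∫ τ in (0:ℝ)..H, e τ N) + (∫ τ in (0:ℝ)..H, e τ (J un))
      + tn • ∫ τ in (0:ℝ)..H, e τ Vn := by
    rw [hFn]
    simp only [map_add, _root_.map_smul, smul_add, smul_comm H tn, hφ1,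
      intervalIntegral.integral_smul]
  have e3 : H • ∑ i ∈ Finset.Icc 2 s, (∑ k ∈ Finset.Icc 1 (m i), β i k • φ k) (D i)
      = ∑ i ∈ Finset.Icc 2 s, ∑ k ∈ Finset.Icc 1 (m i),
          ∫ τ in (0:ℝ)..H, (β i k * τ ^ (k-1) / (H ^ (k-1) * (Nat.factorial (k-1)))) • e τ (D i) := by
    rw [Finset.smul_sum]
    refine Finset.sum_congr rfl fun i _ => ?_
    simp only [ContinuousLinearMap.sum_apply, ContinuousLinearMap.smul_apply, Finset.smul_sum]
    exact Finset.sum_congr rfl fun k hk => hφk i k (Finset.mem_Icc.mp hk).1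
  rw [hvH, hsplit, e1, hφ2, e3]
  abel
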